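/- arXiv:1210.2456 — 5 statements merged into one kernel-verified Lean document; each statement's English description precedes it below -/
import Mathlib

section
/- If e' ∈ PD(e), then for every atom α and action symbol p, Δ_{αp}(e') ⊆ PD(e). Consequently PD(e) is closed under taking partial derivatives. -/
namespace KAT

variable {T A : Type} [DecidableEq A]

/-- Atoms: truth assignments to the primitive tests. -/
abbrev Atom (T : Type) := T → Bool

/-- A guarded string `α₁p₁α₂p₂⋯p_{n-1}αₙ`, as the list of (atom, action)
pairs together with the final atom. -/
structure GStr (T A : Type) where
  pairs : List (Atom T × A)
  last : Atom T

/-- The first atom of a guarded string. -/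
def GStr.first (x : GStr T A) : Atom T :=
  match x.pairs with
  | [] => x.last
  | (α, _) :: _ => α

/-- Fusion product on sets of guarded strings. -/
def fprod (X Y : Set (GStr T A)) : Set (GStr T A) :=
  {z | ∃ x ∈ X, ∃ y ∈ Y, x.last = y.first ∧ z = ⟨x.pairs ++ y.pairs, y.last⟩}

/-- The set of atoms, viewed as guarded strings. -/
def atomsGS : Set (GStr T A) := {z | z.pairs = []}

/-- Fusion powers: `X⁰ = At`, `X^{n+1} = X ⋄ Xⁿ`. -/
def fpow (X : Set (GStr T A)) : ℕ → Set (GStr T A)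
  | 0 => atomsGS
  | n + 1 => fprod X (fpow X n)

/-- `X* = ∪ₙ Xⁿ`. -/
def fstar (X : Set (GStr T A)) : Set (GStr T A) := ⋃ n, fpow X n

/-- Derivative of a set of guarded strings w.r.t. `αp`. -/
def gderiv (α : Atom T) (p : A) (R : Set (GStr T A)) : Set (GStr T A) :=
  {y | (⟨(α, p) :: y.pairs, y.last⟩ : GStr T A) ∈ R}

/-- Boolean expressions over primitive tests `T`. -/
inductive BExp (T : Type) where
  | zero | one
  | test (t : T)
  | not (b : BExp T)
  | or (b₁ b₂ : BExp T)
  | and (b₁ b₂ : BExp T)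

/-- Evaluation of a Boolean expression at an atom (`α ≤ b`). -/
def BExp.eval (α : Atom T) : BExp T → Bool
  | .zero => false
  | .one => true
  | .test t => α t
  | .not b => !(b.eval α)
  | .or b₁ b₂ => b₁.eval α || b₂.eval α
  | .and b₁ b₂ => b₁.eval α && b₂.eval α

/-- KAT expressions over actions `Σ = A` and tests `T`. -/
inductive KExp (T A : Type) where
  | act (p : A)
  | test (b : BExp T)
  | plus (e₁ e₂ : KExp T A)
  | cat (e₁ e₂ : KExp T A)
  | star (e : KExp T A)

/-- Guarded-string semantics of a KAT expression. -/
def gs : KExp T A → Set (GStr T A)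
  | .act p => {z | ∃ α β, z = ⟨[(α, p)], β⟩}
  | .test b => {z | z.pairs = [] ∧ b.eval z.last = true}
  | .plus e₁ e₂ => gs e₁ ∪ gs e₂
  | .cat e₁ e₂ => fprod (gs e₁) (gs e₂)
  | .star e => fstar (gs e)

/-- Syntactic evaluation `E_α`. -/
def Eps (α : Atom T) : KExp T A → Bool
  | .act _ => false
  | .test b => b.eval α
  | .plus e₁ e₂ => Eps α e₁ || Eps α e₂
  | .cat e₁ e₂ => Eps α e₁ && Eps α e₂
  | .star _ => true

/-- `Γ · e`, with `Γ·0 = ∅` and `Γ·1 = Γ`. -/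
def prodSet (Γ : Set (KExp T A)) : KExp T A → Set (KExp T A)
  | .test .zero => ∅
  | .test .one => Γ
  | e => {x | ∃ e' ∈ Γ, x = .cat e' e}

/-- Partial derivatives `Δ_{αp}(e)`. -/
def pd (α : Atom T) (p : A) : KExp T A → Set (KExp T A)
  | .act p' => if p = p' then {.test .one} else ∅
  | .test _ => ∅
  | .plus e₁ e₂ => pd α p e₁ ∪ pd α p e₂
  | .cat e₁ e₂ => prodSet (pd α p e₁) e₂ ∪ (if Eps α e₁ then pd α p e₂ else ∅)
  | .star e => prodSet (pd α p e) (.star e)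

/-- Guarded-string semantics of a set of expressions. -/
def gsSet (E : Set (KExp T A)) : Set (GStr T A) := ⋃ e ∈ E, gs e

/-- Partial derivative of a set of expressions. -/
def pdS (α : Atom T) (p : A) (E : Set (KExp T A)) : Set (KExp T A) :=
  ⋃ e ∈ E, pd α p e

/-- Iterated partial derivative `Δ̂_w(e)` along a word `w ∈ (At·Σ)*`. -/
def pdWord (w : List (Atom T × A)) (e : KExp T A) : Set (KExp T A) :=
  w.foldl (fun E x => pdS x.1 x.2 E) {e}

/-- The closure `PD(e)`. -/
def PD : KExp T A → Set (KExp T A)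
  | .test b => {.test b}
  | .act p => {.act p, .test .one}
  | .plus e₁ e₂ => {.plus e₁ e₂} ∪ PD e₁ ∪ PD e₂
  | .cat e₁ e₂ => {.cat e₁ e₂} ∪ prodSet (PD e₁) e₂ ∪ PD e₂
  | .star e => {.star e} ∪ prodSet (PD e) (.star e)

/-- Number of symbols in the syntactic tree of a Boolean expression. -/
def BExp.size : BExp T → ℕ
  | .zero => 1 | .one => 1 | .test _ => 1
  | .not b => b.size + 1
  | .or b₁ b₂ => b₁.size + b₂.size + 1
  | .and b₁ b₂ => b₁.size + b₂.size + 1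

/-- Number of symbols in the syntactic tree of a KAT expression. -/
def KExp.size : KExp T A → ℕ
  | .act _ => 1
  | .test b => b.size
  | .plus e₁ e₂ => e₁.size + e₂.size + 1
  | .cat e₁ e₂ => e₁.size + e₂.size + 1
  | .star e => e.size + 1

/-- A set of assumptions `Γ`: equations `b p b̄' = 0` and inequalities `c ≤ c'`. -/
structure Gamma (T A : Type) where
  eqns : List (BExp T × A × BExp T)
  ineqs : List (BExp T × BExp T)

/-- `α ∈ At^Γ`. -/
def inAtG (G : Gamma T A) (α : Atom T) : Bool :=
  G.ineqs.all fun cc => !(cc.1.eval α) || cc.2.eval α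

/-- The atoms of `At^Γ`, viewed as guarded strings. -/
def atomsG (G : Gamma T A) : Set (GStr T A) := {z | z.pairs = [] ∧ inAtG G z.last = true}

/-- Γ-restricted fusion powers (base case `At^Γ`). -/
def fpowG (G : Gamma T A) (X : Set (GStr T A)) : ℕ → Set (GStr T A)
  | 0 => atomsG G
  | n + 1 => fprod X (fpowG G X n)

def fstarG (G : Gamma T A) (X : Set (GStr T A)) : Set (GStr T A) := ⋃ n, fpowG G X n

/-- The Γ-restricted guarded-string semantics `GS^Γ`. -/
def gsG (G : Gamma T A) : KExp T A → Set (GStr T A)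
  | .act p => {z | ∃ α β, inAtG G α = true ∧ inAtG G β = true ∧
      (∀ x ∈ G.eqns, x.2.1 = p → x.1.eval α = true → x.2.2.eval β = true) ∧
      z = ⟨[(α, p)], β⟩}
  | .test b => {z | z.pairs = [] ∧ inAtG G z.last = true ∧ b.eval z.last = true}
  | .plus e₁ e₂ => gsG G e₁ ∪ gsG G e₂
  | .cat e₁ e₂ => fprod (gsG G e₁) (gsG G e₂)
  | .star e => fstarG G (gsG G e)

def gsSetG (G : Gamma T A) (E : Set (KExp T A)) : Set (GStr T A) := ⋃ e ∈ E, gsG G e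

/-- Sum of a list of KAT expressions. -/
def sumList (l : List (KExp T A)) : KExp T A := l.foldr .plus (.test .zero)

/-- The universal expression `u = (p₁ + ⋯ + p_k)*`. -/
def uExp (ps : List A) : KExp T A := .star (sumList (ps.map .act))

/-- `r = Σᵢ bᵢpᵢb̄ᵢ' + Σⱼ cⱼc̄ⱼ'`. -/
def rExp (G : Gamma T A) : KExp T A :=
  sumList
    (G.eqns.map (fun x => .cat (.cat (.test x.1) (.act x.2.1)) (.test (.not x.2.2))) ++
     G.ineqs.map (fun x => .cat (.test x.1) (.test (.not x.2))))

/-- The expression `u r u`. -/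
def uru (G : Gamma T A) (ps : List A) : KExp T A :=
  .cat (.cat (uExp ps) (rExp G)) (uExp ps)

/-- `Π{b' | (b p b̄' = 0) ∈ Γ, α ≤ b}` (equal to `1` if there are none). -/
def gammaProd (G : Gamma T A) (α : Atom T) (p : A) : BExp T :=
  ((G.eqns.filter fun x => decide (x.2.1 = p) && x.1.eval α).map fun x => x.2.2).foldr .and .one

def pdGaux (G : Gamma T A) (α : Atom T) (p : A) : KExp T A → Set (KExp T A)
  | .act p' => if p = p' then {.test (gammaProd G α p)} else ∅
  | .test _ => ∅
  | .plus e₁ e₂ => pdGaux G α p e₁ ∪ pdGaux G α p e₂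
  | .cat e₁ e₂ => prodSet (pdGaux G α p e₁) e₂ ∪ (if Eps α e₁ then pdGaux G α p e₂ else ∅)
  | .star e => prodSet (pdGaux G α p e) (.star e)

/-- The Γ-partial derivative `Δ^Γ_{αp}(e)`. -/
def pdG (G : Gamma T A) (α : Atom T) (p : A) (e : KExp T A) : Set (KExp T A) :=
  if inAtG G α then pdGaux G α p e else ∅

/-- The atoms occurring in a guarded string. -/
def atomsOf (x : GStr T A) : List (Atom T) := x.pairs.map Prod.fst ++ [x.last]

/-- The substrings `α p β` of a guarded string. -/
def triplesOf (x : GStr T A) : List (Atom T × A × Atom T) :=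
  List.zipWith (fun ap β => (ap.1, ap.2, β)) x.pairs
    ((x.pairs.map Prod.fst).drop 1 ++ [x.last])

/-- `Γ·e` on transition pairs, with `Γ·0 = ∅` and `Γ·1 = Γ`. -/
def prodPairs (Γ : Set ((Atom T × A) × KExp T A)) :
    KExp T A → Set ((Atom T × A) × KExp T A)
  | .test .zero => ∅
  | .test .one => Γ
  | e => {x | ∃ y ∈ Γ, x = (y.1, .cat y.2 e)}

/-- The transition function `𝖿`. -/
def fset : KExp T A → Set ((Atom T × A) × KExp T A)
  | .act p => {x | ∃ α : Atom T, x = ((α, p), .test .one)}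
  | .test _ => ∅
  | .plus e₁ e₂ => fset e₁ ∪ fset e₂
  | .cat e₁ e₂ => prodPairs (fset e₁) e₂ ∪ {x ∈ fset e₂ | Eps x.1.1 e₁ = true}
  | .star e => prodPairs (fset e) (.star e)

/-- `der_{αp}(e) = {e' | (αp, e') ∈ 𝖿(e)}`. -/
def der (α : Atom T) (p : A) (e : KExp T A) : Set (KExp T A) :=
  {e' | ((α, p), e') ∈ fset e}

theorem self_mem_PD (e : KExp T A) : e ∈ PD e := by
  cases e <;> simp [PD]

theorem prodSet_mono {Γ Δ : Set (KExp T A)} (h : Γ ⊆ Δ) (f : KExp T A) :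
    prodSet Γ f ⊆ prodSet Δ f := by
  match f with
  | .test .zero => simp [prodSet]
  | .test .one => simpa [prodSet] using h
  | .test (.test _) | .test (.not _) | .test (.or _ _) | .test (.and _ _)
  | .act _ | .plus _ _ | .cat _ _ | .star _ =>
    intro x hx
    obtain ⟨e', he', rfl⟩ := hx
    exact ⟨e', h he', rfl⟩

theorem mem_prodSet {Γ : Set (KExp T A)} {f x : KExp T A} (hx : x ∈ prodSet Γ f) :
    (f = .test .one ∧ x ∈ Γ) ∨ ∃ e' ∈ Γ, x = .cat e' f := by
  match f with
  | .test .zero => exact absurd hx (by simp [prodSet])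
  | .test .one => exact Or.inl ⟨rfl, hx⟩
  | .test (.test _) | .test (.not _) | .test (.or _ _) | .test (.and _ _)
  | .act _ | .plus _ _ | .cat _ _ | .star _ => exact Or.inr hx

end KAT

open KAT in
/-- `PD(e)` is closed under partial derivatives. -/
theorem pd_subset_PD {T A : Type} [DecidableEq A] (e e' : KExp T A)
    (h : e' ∈ PD e) (α : Atom T) (p : A) :
    pd α p e' ⊆ PD e := by
  induction e generalizing e' with
  | act q =>
    rcases h with rfl | rfl
    · simp only [pd]
      split
      · intro x hx; simp_all [PD]
      · simp
    · simp [pd]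
  | test b =>
    simp only [PD, Set.mem_singleton_iff] at h
    subst h; simp [pd]
  | plus e₁ e₂ ih₁ ih₂ =>
    rcases h with (rfl | h) | h
    · simp only [pd]
      exact Set.union_subset
        ((ih₁ e₁ (self_mem_PD e₁) ).trans (by intro x hx; exact Or.inl (Or.inr hx)))
        ((ih₂ e₂ (self_mem_PD e₂)).trans (by intro x hx; exact Or.inr hx))
    · exact (ih₁ e' h).trans (by intro x hx; exact Or.inl (Or.inr hx))
    · exact (ih₂ e' h).trans (by intro x hx; exact Or.inr hx)
  | cat e₁ e₂ ih₁ ih₂ =>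
    have h₁ : prodSet (PD e₁) e₂ ⊆ PD (KExp.cat e₁ e₂) := by
      intro x hx; exact Or.inl (Or.inr hx)
    have h₂ : PD e₂ ⊆ PD (KExp.cat e₁ e₂) := by
      intro x hx; exact Or.inr hx
    rcases h with (rfl | h) | h
    · simp only [pd]
      apply Set.union_subset
      · exact (prodSet_mono (ih₁ e₁ (self_mem_PD e₁)) e₂).trans h₁
      · split
        · exact (ih₂ e₂ (self_mem_PD e₂)).trans h₂
        · simp
    · rcases mem_prodSet h with ⟨rfl, h⟩ | ⟨f, hf, rfl⟩
      · exact (ih₁ e' h).trans h₁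
      · simp only [pd]
        apply Set.union_subset
        · exact (prodSet_mono (ih₁ f hf) e₂).trans h₁
        · split
          · exact (ih₂ e₂ (self_mem_PD e₂)).trans h₂
          · simp
    · exact (ih₂ e' h).trans h₂
  | star e ih =>
    have h₁ : prodSet (PD e) (.star e) ⊆ PD (KExp.star e) := fun x hx => Or.inr hx
    rcases h with rfl | h
    · simp only [pd]
      exact (prodSet_mono (ih e (self_mem_PD e)) _).trans h₁
    · rcases mem_prodSet h with ⟨he, _⟩ | ⟨f, hf, rfl⟩
      · exact absurd he (by simp)
      · simp only [pd]
        apply Set.union_subset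
        · exact (prodSet_mono (ih f hf) _).trans h₁
        · split
          · exact (prodSet_mono (ih e (self_mem_PD e)) _).trans h₁
          · simp
end

section
/- Two KAT expressions e₁ and e₂ have the same guarded-string semantics, GS(e₁) = GS(e₂), if and only if for every atom α, E_α(e₁) = E_α(e₂), and for every atom α and action p, GS(Δ_{αp}(e₁)) = GS(Δ_{αp}(e₂)). -/
namespace KAT

variable {T A : Type} [DecidableEq A]

/-! ### Auxiliary lemmas -/

lemma gsSet_union (E F : Set (KExp T A)) : gsSet (E ∪ F) = gsSet E ∪ gsSet F := by
  ext z
  simp only [gsSet, Set.mem_union, Set.mem_iUnion, exists_prop]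
  constructor
  · rintro ⟨e, (h | h), hz⟩
    exacts [Or.inl ⟨e, h, hz⟩, Or.inr ⟨e, h, hz⟩]
  · rintro (⟨e, h, hz⟩ | ⟨e, h, hz⟩)
    exacts [⟨e, Or.inl h, hz⟩, ⟨e, Or.inr h, hz⟩]

lemma gsSet_singleton (e : KExp T A) : gsSet {e} = gs e := by simp [gsSet]

lemma gsSet_empty : gsSet (∅ : Set (KExp T A)) = ∅ := by simp [gsSet]

lemma fprod_atomsGS (X : Set (GStr T A)) : fprod X atomsGS = X := by
  ext z
  constructor
  · rintro ⟨x, hx, y, hy, hl, rfl⟩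
    obtain ⟨yp, yl⟩ := y
    obtain rfl : yp = [] := hy
    obtain ⟨xp, xl⟩ := x
    simp only [GStr.first] at hl
    subst hl
    simpa using hx
  · intro hz
    exact ⟨z, hz, ⟨[], z.last⟩, rfl, rfl, by simp⟩

lemma fprod_biUnion {ι : Type*} (s : Set ι) (X : ι → Set (GStr T A)) (Y : Set (GStr T A)) :
    fprod (⋃ i ∈ s, X i) Y = ⋃ i ∈ s, fprod (X i) Y := by
  ext z
  constructor
  · rintro ⟨x, hx, y, hy, hl, rfl⟩
    rw [Set.mem_iUnion₂] at hx
    obtain ⟨i, hi, hxi⟩ := hx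
    exact Set.mem_iUnion₂.mpr ⟨i, hi, x, hxi, y, hy, hl, rfl⟩
  · intro hz
    rw [Set.mem_iUnion₂] at hz
    obtain ⟨i, hi, x, hx, y, hy, hl, rfl⟩ := hz
    exact ⟨x, Set.mem_iUnion₂.mpr ⟨i, hi, hx⟩, y, hy, hl, rfl⟩

lemma gsSet_prodSet (Γ : Set (KExp T A)) (e : KExp T A) :
    gsSet (prodSet Γ e) = fprod (gsSet Γ) (gs e) := by
  have generic : gsSet {x | ∃ e' ∈ Γ, x = KExp.cat e' e} = fprod (gsSet Γ) (gs e) := by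
    have : {x | ∃ e' ∈ Γ, x = KExp.cat e' e} = ⋃ e' ∈ Γ, {KExp.cat e' e} := by
      ext x; simp [eq_comm]
    rw [this]
    have h2 : gsSet (⋃ e' ∈ Γ, ({KExp.cat e' e} : Set (KExp T A)))
        = ⋃ e' ∈ Γ, fprod (gs e') (gs e) := by
      simp [gsSet, gs]
    rw [h2, gsSet, ← fprod_biUnion]
  cases e with
  | act p => exact generic
  | test b =>
    cases b with
    | zero =>
      show gsSet ∅ = _
      rw [gsSet_empty]
      ext z
      simp only [Set.mem_empty_iff_false, false_iff]
      rintro ⟨x, -, y, hy, -, -⟩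
      simp [gs, BExp.eval] at hy
    | one =>
      show gsSet Γ = _
      have : gs (KExp.test (BExp.one) : KExp T A) = atomsGS := by
        ext z; simp [gs, atomsGS, BExp.eval]
      rw [this, fprod_atomsGS]
    | test t => exact generic
    | not b => exact generic
    | or b₁ b₂ => exact generic
    | and b₁ b₂ => exact generic
  | plus e₁ e₂ => exact generic
  | cat e₁ e₂ => exact generic
  | star e => exact generic

lemma nil_mem_fprod {X Y : Set (GStr T A)} {α : Atom T} :
    (⟨[], α⟩ : GStr T A) ∈ fprod X Y ↔ (⟨[], α⟩ : GStr T A) ∈ X ∧ (⟨[], α⟩ : GStr T A) ∈ Y := by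
  constructor
  · rintro ⟨x, hx, y, hy, hl, heq⟩
    obtain ⟨xp, xl⟩ := x
    obtain ⟨yp, yl⟩ := y
    simp only [GStr.mk.injEq] at heq
    obtain ⟨hnil, rfl⟩ := heq
    obtain ⟨rfl, rfl⟩ := List.append_eq_nil_iff.mp hnil.symm
    simp only [GStr.first] at hl
    subst hl
    exact ⟨hx, hy⟩
  · rintro ⟨h1, h2⟩
    exact ⟨⟨[], α⟩, h1, ⟨[], α⟩, h2, rfl, by simp⟩

lemma eps_iff (α : Atom T) (e : KExp T A) :
    Eps α e = true ↔ (⟨[], α⟩ : GStr T A) ∈ gs e := by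
  induction e with
  | act p =>
    simp only [Eps, gs, Set.mem_setOf_eq]
    constructor
    · intro h; simp at h
    · rintro ⟨α', β, h⟩
      simp only [GStr.mk.injEq] at h
      exact absurd h.1 (by simp)
  | test b => simp [Eps, gs]
  | plus e₁ e₂ ih₁ ih₂ =>
    simp only [Eps, gs, Set.mem_union, Bool.or_eq_true, ih₁, ih₂]
  | cat e₁ e₂ ih₁ ih₂ =>
    simp only [Eps, gs, Bool.and_eq_true, ih₁, ih₂, nil_mem_fprod]
  | star e ih =>
    simp only [Eps, gs, fstar, Set.mem_iUnion, true_iff]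
    exact ⟨0, by simp [fpow, atomsGS]⟩

lemma mem_gderiv_fprod {X Y : Set (GStr T A)} {α : Atom T} {p : A} {z : GStr T A} :
    z ∈ gderiv α p (fprod X Y) ↔
      z ∈ fprod (gderiv α p X) Y ∨ ((⟨[], α⟩ : GStr T A) ∈ X ∧ z ∈ gderiv α p Y) := by
  obtain ⟨zp, zl⟩ := z
  constructor
  · rintro ⟨⟨xp, xl⟩, hx, ⟨yp, yl⟩, hy, hl, heq⟩
    simp only [GStr.mk.injEq] at heq
    obtain ⟨hpl, rfl⟩ := heq
    cases xp with
    | nil =>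
      right
      simp only [List.nil_append] at hpl
      subst hpl
      simp only [GStr.first] at hl
      subst hl
      exact ⟨hx, hy⟩
    | cons hd tl =>
      left
      simp only [List.cons_append, List.cons.injEq] at hpl
      obtain ⟨rfl, hpl⟩ := hpl
      refine ⟨⟨tl, xl⟩, hx, ⟨yp, zl⟩, hy, hl, ?_⟩
      simp [gderiv, hpl]
  · rintro (⟨x, hx, y, hy, hl, heq⟩ | ⟨h1, h2⟩)
    · simp only [GStr.mk.injEq] at heq
      obtain ⟨rfl, rfl⟩ := heq
      refine ⟨⟨(α, p) :: x.pairs, x.last⟩, hx, y, hy, hl, ?_⟩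
      simp [gderiv]
    · exact ⟨⟨[], α⟩, h1, ⟨(α, p) :: zp, zl⟩, h2, rfl, by simp⟩

lemma gderiv_atomsGS (α : Atom T) (p : A) : gderiv α p (atomsGS : Set (GStr T A)) = ∅ := by
  ext z; simp [gderiv, atomsGS]

lemma mem_gderiv_fstar {X : Set (GStr T A)} {α : Atom T} {p : A} {z : GStr T A} :
    z ∈ gderiv α p (fstar X) ↔ z ∈ fprod (gderiv α p X) (fstar X) := by
  constructor
  · intro hz
    obtain ⟨n, hn⟩ : ∃ n, z ∈ gderiv α p (fpow X n) := by
      obtain ⟨s, ⟨n, rfl⟩, hs⟩ := hz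
      exact ⟨n, hs⟩
    clear hz
    induction n with
    | zero => rw [fpow, gderiv_atomsGS] at hn; exact absurd hn (Set.notMem_empty z)
    | succ n ih =>
      rw [fpow] at hn
      rcases mem_gderiv_fprod.mp hn with h | ⟨_, h⟩
      · obtain ⟨x, hx, y, hy, hl, heq⟩ := h
        exact ⟨x, hx, y, Set.mem_iUnion.mpr ⟨n, hy⟩, hl, heq⟩
      · exact ih h
  · rintro ⟨x, hx, y, hy, hl, heq⟩
    obtain ⟨n, hn⟩ := Set.mem_iUnion.mp hy
    have : z ∈ gderiv α p (fpow X (n + 1)) := by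
      rw [fpow]
      exact mem_gderiv_fprod.mpr (Or.inl ⟨x, hx, y, hn, hl, heq⟩)
    show (⟨(α, p) :: z.pairs, z.last⟩ : GStr T A) ∈ fstar X
    exact Set.mem_iUnion.mpr ⟨n + 1, this⟩

lemma gderiv_fstar (α : Atom T) (p : A) (X : Set (GStr T A)) :
    gderiv α p (fstar X) = fprod (gderiv α p X) (fstar X) := by
  ext z; exact mem_gderiv_fstar

lemma gderiv_union (α : Atom T) (p : A) (X Y : Set (GStr T A)) :
    gderiv α p (X ∪ Y) = gderiv α p X ∪ gderiv α p Y := rfl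

lemma gsSet_pd (α : Atom T) (p : A) (e : KExp T A) :
    gsSet (pd α p e) = gderiv α p (gs e) := by
  induction e with
  | act p' =>
    by_cases h : p = p'
    · subst h
      rw [pd, if_pos rfl, gsSet_singleton]
      ext z
      simp only [gs, gderiv, Set.mem_setOf_eq, BExp.eval]
      constructor
      · rintro ⟨hz, -⟩
        exact ⟨α, z.last, by simp [hz]⟩
      · rintro ⟨α', β, hz⟩
        simp only [GStr.mk.injEq, List.cons.injEq] at hz
        exact ⟨hz.1.2, trivial⟩
    · rw [pd, if_neg h, gsSet_empty]
      ext z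
      simp only [Set.mem_empty_iff_false, false_iff, gderiv, gs, Set.mem_setOf_eq]
      rintro ⟨α', β, hz⟩
      simp only [GStr.mk.injEq, List.cons.injEq, Prod.mk.injEq] at hz
      exact h hz.1.1.2
  | test b =>
    rw [pd, gsSet_empty]
    ext z
    simp [gderiv, gs]
  | plus e₁ e₂ ih₁ ih₂ =>
    rw [pd, gsSet_union, ih₁, ih₂]
    rfl
  | cat e₁ e₂ ih₁ ih₂ =>
    rw [pd, gsSet_union, gsSet_prodSet, ih₁]
    ext z
    rw [Set.mem_union]
    show _ ∨ z ∈ gsSet _ ↔ z ∈ gderiv α p (fprod (gs e₁) (gs e₂))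
    rw [mem_gderiv_fprod]
    by_cases h : Eps α e₁ = true
    · rw [if_pos h, ih₂]
      have := (eps_iff α e₁).mp h
      tauto
    · rw [if_neg h, gsSet_empty]
      have : ¬ (⟨[], α⟩ : GStr T A) ∈ gs e₁ := fun hc => h ((eps_iff α e₁).mpr hc)
      simp only [Set.mem_empty_iff_false, or_false]
      tauto
  | star e ih =>
    rw [pd, gsSet_prodSet, ih]
    show fprod (gderiv α p (gs e)) (fstar (gs e)) = gderiv α p (fstar (gs e))
    rw [gderiv_fstar]

end KAT

open KAT in
/-- Bisimulation characterization of guarded-string equivalence. -/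
theorem gs_eq_iff {T A : Type} [DecidableEq A] (e₁ e₂ : KExp T A) :
    gs e₁ = gs e₂ ↔
      (∀ α : Atom T, Eps α e₁ = Eps α e₂) ∧
      (∀ (α : Atom T) (p : A), gsSet (pd α p e₁) = gsSet (pd α p e₂)) := by
  constructor
  · intro h
    refine ⟨fun α => ?_, fun α p => ?_⟩
    · have h1 := eps_iff α e₁
      have h2 := eps_iff α e₂
      rw [h] at h1
      rcases Bool.eq_false_or_eq_true (Eps α e₁) with h' | h' <;>
        rcases Bool.eq_false_or_eq_true (Eps α e₂) with h'' | h'' <;>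
        simp_all
    · rw [gsSet_pd, gsSet_pd, h]
  · rintro ⟨hE, hD⟩
    ext z
    obtain ⟨zp, zl⟩ := z
    cases zp with
    | nil =>
      have h1 := eps_iff zl e₁
      have h2 := eps_iff zl e₂
      rw [hE zl] at h1
      exact h1.symm.trans h2
    | cons hd tl =>
      obtain ⟨α, p⟩ := hd
      have := hD α p
      rw [gsSet_pd, gsSet_pd] at this
      have := Set.ext_iff.mp this ⟨tl, zl⟩
      exact this
end

section
/- For sets of guarded strings X ⊆ GS and n ≥ 0, with X⁰ = At and X^{n+1} = X ⋄ Xⁿ, the derivative of the n-fold fusion power satisfies: for αp ∈ At·Σ, D_{αp}(∪_{n≥0} Xⁿ) = D_{αp}(X) ⋄ (∪_{n≥0} Xⁿ). -/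
open KAT in
/-- `D_{αp}(∪ₙ Xⁿ) = D_{αp}(X) ⋄ (∪ₙ Xⁿ)`. -/
theorem gderiv_fstar {T A : Type} (X : Set (GStr T A)) (α : Atom T) (p : A) :
    gderiv α p (⋃ n, fpow X n) = fprod (gderiv α p X) (⋃ n, fpow X n) := by
  ext y
  constructor
  · rintro ⟨_, ⟨n, rfl⟩, hy⟩
    induction n generalizing y with
    | zero => exact absurd hy (by simp [gderiv, fpow, atomsGS])
    | succ n ih =>
      obtain ⟨x, hx, r, hr, hlast, heq⟩ := hy
      obtain ⟨hp, hl⟩ : (α, p) :: y.pairs = x.pairs ++ r.pairs ∧ y.last = r.last := by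
        injection heq with h1 h2; exact ⟨h1, h2⟩
      match hxp : x.pairs with
      | [] =>
        rw [hxp] at hp
        have : y ∈ gderiv α p (fpow X n) := by
          show (⟨(α, p) :: y.pairs, y.last⟩ : GStr T A) ∈ fpow X n
          have : r = ⟨(α, p) :: y.pairs, y.last⟩ := by
            cases r; simp_all
          rwa [this] at hr
        exact ih y this
      | (β, q) :: t =>
        rw [hxp] at hp
        have hβ : β = α := by injection hp with h _; injection h with h _; exact h.symm
        have hq : q = p := by injection hp with h _; injection h with _ h; exact h.symm
        have ht : y.pairs = t ++ r.pairs := by injection hp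
        refine ⟨⟨t, x.last⟩, ?_, r, Set.mem_iUnion.2 ⟨n, hr⟩, hlast, ?_⟩
        · show (⟨(α, p) :: t, x.last⟩ : GStr T A) ∈ X
          have : (⟨(α, p) :: t, x.last⟩ : GStr T A) = x := by
            cases x; simp_all
          rwa [this]
        · cases y; simp_all
  · rintro ⟨x', hx', r, hr, hlast, heq⟩
    obtain ⟨n, hr⟩ := Set.mem_iUnion.1 hr
    refine Set.mem_iUnion.2 ⟨n + 1, ⟨⟨(α, p) :: x'.pairs, x'.last⟩, hx', r, hr, hlast, ?_⟩⟩
    show (⟨(α, p) :: y.pairs, y.last⟩ : GStr T A) = _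
    subst heq; rfl
end

section
/- Let Γ be a set of assumptions consisting of equations bᵢpᵢb̄ᵢ' = 0 and inequalities cⱼ ≤ cⱼ' between Boolean expressions. Then for every KAT expression e, GS^Γ(e) = GS(e) \ GS(uru), where u = (p₁ + ⋯ + p_k)* ranges over all action symbols and r = Σᵢ bᵢpᵢb̄ᵢ' + Σⱼ cⱼc̄ⱼ'. -/
namespace KAT

variable {T A : Type} [DecidableEq A]

/-! ### Auxiliary development for the theorem -/

/-- Goodness of a list of pairs with final atom: all atoms in `At^Γ` and
all triples satisfy the equations of `Γ`. -/
def GoodP (G : Gamma T A) : List (Atom T × A) → Atom T → Prop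
  | [], β => inAtG G β = true
  | (α, p) :: rest, β =>
      inAtG G α = true ∧
      (∀ q ∈ G.eqns, q.2.1 = p → q.1.eval α = true →
        q.2.2.eval (GStr.first ⟨rest, β⟩) = true) ∧
      GoodP G rest β

def GoodG (G : Gamma T A) (z : GStr T A) : Prop := GoodP G z.pairs z.last

@[simp] lemma GoodP_nil (G : Gamma T A) (β : Atom T) :
    GoodP G [] β ↔ inAtG G β = true := Iff.rfl

@[simp] lemma GoodP_cons (G : Gamma T A) (α : Atom T) (p : A)
    (l : List (Atom T × A)) (β : Atom T) :
    GoodP G ((α, p) :: l) β ↔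
      inAtG G α = true ∧
      (∀ q ∈ G.eqns, q.2.1 = p → q.1.eval α = true →
        q.2.2.eval (GStr.first ⟨l, β⟩) = true) ∧
      GoodP G l β := Iff.rfl

lemma first_append (l₁ l₂ : List (Atom T × A)) (β : Atom T) :
    GStr.first (⟨l₁ ++ l₂, β⟩ : GStr T A) =
      GStr.first ⟨l₁, GStr.first ⟨l₂, β⟩⟩ := by
  cases l₁ with
  | nil => rfl
  | cons a l => rcases a with ⟨α, p⟩; rfl

lemma GoodP_first {G : Gamma T A} {l : List (Atom T × A)} {β : Atom T}
    (h : GoodP G l β) : inAtG G (GStr.first ⟨l, β⟩) = true := by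
  cases l with
  | nil => exact h
  | cons a l => rcases a with ⟨α, p⟩; exact h.1

lemma GoodP_append (G : Gamma T A) (l₁ l₂ : List (Atom T × A)) (β : Atom T) :
    GoodP G (l₁ ++ l₂) β ↔
      GoodP G l₁ (GStr.first ⟨l₂, β⟩) ∧ GoodP G l₂ β := by
  induction l₁ with
  | nil =>
    simp only [List.nil_append, GoodP_nil]
    exact ⟨fun h => ⟨GoodP_first h, h⟩, fun h => h.2⟩
  | cons a l ih =>
    rcases a with ⟨α, p⟩
    simp only [List.cons_append, GoodP_cons, ih, first_append]
    tauto

lemma first_eta (y : GStr T A) : GStr.first ⟨y.pairs, y.last⟩ = y.first := rfl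

lemma fprod_good (G : Gamma T A) (X Y : Set (GStr T A)) :
    fprod {z ∈ X | GoodG G z} {z ∈ Y | GoodG G z} = {z ∈ fprod X Y | GoodG G z} := by
  ext z
  constructor
  · rintro ⟨x, ⟨hx, hgx⟩, y, ⟨hy, hgy⟩, hxy, rfl⟩
    refine ⟨⟨x, hx, y, hy, hxy, rfl⟩, ?_⟩
    show GoodP G (x.pairs ++ y.pairs) y.last
    rw [GoodP_append, first_eta]
    exact ⟨by rw [← hxy]; exact hgx, hgy⟩
  · rintro ⟨⟨x, hx, y, hy, hxy, rfl⟩, hg⟩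
    have hg' : GoodP G (x.pairs ++ y.pairs) y.last := hg
    rw [GoodP_append, first_eta] at hg'
    exact ⟨x, ⟨hx, show GoodP G x.pairs x.last by rw [hxy]; exact hg'.1⟩,
      y, ⟨hy, hg'.2⟩, hxy, rfl⟩

lemma gs_sumList (l : List (KExp T A)) (z : GStr T A) :
    z ∈ gs (sumList l) ↔ ∃ e ∈ l, z ∈ gs e := by
  induction l with
  | nil =>
    simp only [sumList, List.foldr_nil, gs, BExp.eval, Set.mem_setOf_eq]
    simp
  | cons e l ih =>
    show z ∈ gs (.plus e (sumList l)) ↔ _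
    simp only [gs, Set.mem_union, ih, List.mem_cons]
    constructor
    · rintro (h | ⟨e', he', h⟩)
      · exact ⟨e, Or.inl rfl, h⟩
      · exact ⟨e', Or.inr he', h⟩
    · rintro ⟨e', (rfl | he'), h⟩
      · exact Or.inl h
      · exact Or.inr ⟨e', he', h⟩

lemma gs_uExp (ps : List A) (hps : ∀ p : A, p ∈ ps) :
    gs (uExp ps) = (Set.univ : Set (GStr T A)) := by
  ext z
  simp only [Set.mem_univ, iff_true]
  rcases z with ⟨l, β⟩
  show (⟨l, β⟩ : GStr T A) ∈ fstar (gs (sumList (ps.map .act)))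
  induction l with
  | nil => exact Set.mem_iUnion.2 ⟨0, rfl⟩
  | cons a l ih =>
    rcases a with ⟨α, p⟩
    rcases Set.mem_iUnion.1 ih with ⟨n, hn⟩
    refine Set.mem_iUnion.2 ⟨n + 1, ?_⟩
    refine ⟨⟨[(α, p)], GStr.first ⟨l, β⟩⟩, ?_, ⟨l, β⟩, hn, rfl, rfl⟩
    rw [gs_sumList]
    exact ⟨.act p, List.mem_map.2 ⟨p, hps p, rfl⟩, α, GStr.first ⟨l, β⟩, rfl⟩

lemma mem_gs_rExp (G : Gamma T A) (z : GStr T A) :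
    z ∈ gs (rExp G) ↔
      (∃ q ∈ G.eqns, ∃ α β, z = ⟨[(α, q.2.1)], β⟩ ∧ q.1.eval α = true ∧
        q.2.2.eval β = false) ∨
      (∃ c ∈ G.ineqs, z.pairs = [] ∧ c.1.eval z.last = true ∧
        c.2.eval z.last = false) := by
  rw [rExp, gs_sumList]
  constructor
  · rintro ⟨e, he, hz⟩
    rcases List.mem_append.1 he with he | he
    · rcases List.mem_map.1 he with ⟨q, hq, rfl⟩
      left
      rcases hz with ⟨v, ⟨x, ⟨hx1, hx2⟩, y, ⟨α', β', rfl⟩, hxy, rfl⟩, w, ⟨hw1, hw2⟩, hvw, rfl⟩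
      rcases x with ⟨xp, xl⟩
      dsimp at hx1; subst hx1
      rcases w with ⟨wp, wl⟩
      dsimp at hw1; subst hw1
      refine ⟨q, hq, α', wl, ?_, ?_, ?_⟩
      · simp
      · simp only [GStr.first] at hxy; rw [hxy] at hx2; exact hx2
      · simpa [BExp.eval] using hw2
    · rcases List.mem_map.1 he with ⟨c, hc, rfl⟩
      right
      rcases hz with ⟨x, ⟨hx1, hx2⟩, y, ⟨hy1, hy2⟩, hxy, rfl⟩
      rcases x with ⟨xp, xl⟩; rcases y with ⟨yp, yl⟩
      dsimp at hx1 hy1; subst hx1; subst hy1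
      simp only [GStr.first] at hxy; subst hxy
      refine ⟨c, hc, by simp, hx2, by simpa [BExp.eval] using hy2⟩
  · rintro (⟨q, hq, α, β, rfl, h1, h2⟩ | ⟨c, hc, h0, h1, h2⟩)
    · refine ⟨_, List.mem_append.2 (Or.inl (List.mem_map.2 ⟨q, hq, rfl⟩)), ?_⟩
      exact ⟨⟨[(α, q.2.1)], β⟩,
        ⟨⟨[], α⟩, ⟨rfl, h1⟩, ⟨[(α, q.2.1)], β⟩, ⟨α, β, rfl⟩, rfl, rfl⟩,
        ⟨[], β⟩, ⟨rfl, by simp [BExp.eval, h2]⟩, rfl, by simp⟩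
    · refine ⟨_, List.mem_append.2 (Or.inr (List.mem_map.2 ⟨c, hc, rfl⟩)), ?_⟩
      rcases z with ⟨zp, zl⟩
      dsimp at h0; subst h0
      exact ⟨⟨[], zl⟩, ⟨rfl, h1⟩, ⟨[], zl⟩, ⟨rfl, by simp [BExp.eval, h2]⟩, rfl, rfl⟩

lemma uru_intro (G : Gamma T A) (ps : List A) (hps : ∀ p : A, p ∈ ps)
    (x w y : GStr T A) (hw : w ∈ gs (rExp G))
    (h1 : x.last = w.first) (h2 : w.last = y.first) :
    (⟨x.pairs ++ w.pairs ++ y.pairs, y.last⟩ : GStr T A) ∈ gs (uru G ps) := by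
  refine ⟨⟨x.pairs ++ w.pairs, w.last⟩,
    ⟨x, ?_, w, hw, h1, rfl⟩, y, ?_, h2, rfl⟩
  · rw [gs_uExp ps hps]; trivial
  · rw [gs_uExp ps hps]; trivial

lemma uru_cons (G : Gamma T A) (ps : List A) (hps : ∀ p : A, p ∈ ps)
    (α : Atom T) (p : A) (l : List (Atom T × A)) (β : Atom T)
    (h : (⟨l, β⟩ : GStr T A) ∈ gs (uru G ps)) :
    (⟨(α, p) :: l, β⟩ : GStr T A) ∈ gs (uru G ps) := by
  rcases h with ⟨v, ⟨x, _, w, hw, h1, rfl⟩, y, _, h2, hz⟩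
  have hp : l = (x.pairs ++ w.pairs) ++ y.pairs ∧ β = y.last := by
    injection hz with hl hb; exact ⟨hl, hb⟩
  rcases hp with ⟨rfl, rfl⟩
  have := uru_intro G ps hps ⟨(α, p) :: x.pairs, x.last⟩ w y hw h1 h2
  simpa using this

lemma not_good_mem_uru (G : Gamma T A) (ps : List A) (hps : ∀ p : A, p ∈ ps) :
    ∀ (l : List (Atom T × A)) (β : Atom T), ¬ GoodP G l β →
      (⟨l, β⟩ : GStr T A) ∈ gs (uru G ps) := by
  intro l
  induction l with
  | nil =>
    intro β h
    simp only [GoodP_nil, inAtG, List.all_eq_true, not_forall] at h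
    rcases h with ⟨c, hc, hcv⟩
    simp only [Bool.or_eq_true, Bool.not_eq_true', not_or, Bool.not_eq_true] at hcv
    rcases Bool.not_eq_true _ ▸ hcv with ⟨hc1, hc2⟩
    have := uru_intro G ps hps ⟨[], β⟩ ⟨[], β⟩ ⟨[], β⟩
      ((mem_gs_rExp G _).2 (Or.inr ⟨c, hc, rfl,
        by simpa using hc1, hc2⟩)) rfl rfl
    simpa using this
  | cons a l ih =>
    rcases a with ⟨α, p⟩
    intro β h
    simp only [GoodP_cons] at h
    by_cases hα : inAtG G α = true
    · by_cases hC : ∀ q ∈ G.eqns, q.2.1 = p → q.1.eval α = true →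
        q.2.2.eval (GStr.first ⟨l, β⟩) = true
      · have hG : ¬ GoodP G l β := by tauto
        exact uru_cons G ps hps α p l β (ih β hG)
      · push_neg at hC
        rcases hC with ⟨q, hq, hqp, hq1, hq2⟩
        have hw : (⟨[(α, p)], GStr.first ⟨l, β⟩⟩ : GStr T A) ∈ gs (rExp G) := by
          rw [mem_gs_rExp]
          exact Or.inl ⟨q, hq, α, GStr.first ⟨l, β⟩, by rw [hqp], hq1,
            Bool.not_eq_true _ ▸ hq2⟩
        have := uru_intro G ps hps ⟨[], α⟩ ⟨[(α, p)], GStr.first ⟨l, β⟩⟩ ⟨l, β⟩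
          hw rfl rfl
        simpa using this
    · have hw : (⟨[], α⟩ : GStr T A) ∈ gs (rExp G) := by
        rw [mem_gs_rExp]
        right
        simp only [inAtG, List.all_eq_true, not_forall] at hα
        rcases hα with ⟨c, hc, hcv⟩
        simp only [Bool.or_eq_true, Bool.not_eq_true', not_or, Bool.not_eq_true] at hcv
        exact ⟨c, hc, rfl, by simpa using hcv.1, hcv.2⟩
      have := uru_intro G ps hps ⟨[], α⟩ ⟨[], α⟩ ⟨(α, p) :: l, β⟩ hw rfl rfl
      simpa using this

lemma mem_gs_uru_iff (G : Gamma T A) (ps : List A) (hps : ∀ p : A, p ∈ ps)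
    (z : GStr T A) : z ∈ gs (uru G ps) ↔ ¬ GoodG G z := by
  constructor
  · rintro ⟨v, ⟨x, _, w, hw, h1, rfl⟩, y, _, h2, rfl⟩ hg
    have hg' : GoodP G ((x.pairs ++ w.pairs) ++ y.pairs) y.last := hg
    rw [List.append_assoc, GoodP_append, GoodP_append, first_eta] at hg'
    rcases hg' with ⟨_, hgw, hgy⟩
    rcases (mem_gs_rExp G w).1 hw with ⟨q, hq, α, β, hwz, hb1, hb2⟩ |
      ⟨c, hc, h0, hc1, hc2⟩
    · subst hwz
      simp only [GoodP_cons] at hgw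
      have hβ : y.first = β := h2.symm
      have := hgw.2.1 q hq rfl hb1
      rw [show GStr.first (⟨[], y.first⟩ : GStr T A) = β from hβ] at this
      rw [this] at hb2
      exact absurd hb2 (by simp)
    · rcases w with ⟨wp, wl⟩
      dsimp at h0; subst h0
      simp only [GoodP_nil] at hgw
      have : GStr.first (⟨[], wl⟩ : GStr T A) = wl := rfl
      rw [show y.first = wl from h2.symm] at hgw
      simp only [inAtG, List.all_eq_true] at hgw
      have := hgw c hc
      rw [hc1, hc2] at this
      simp at this
  · intro h
    rcases z with ⟨l, β⟩
    exact not_good_mem_uru G ps hps l β h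

lemma gsG_eq_good (G : Gamma T A) (e : KExp T A) :
    gsG G e = {z ∈ gs e | GoodG G z} := by
  induction e with
  | act p =>
    ext z
    constructor
    · rintro ⟨α, β, hα, hβ, hcond, rfl⟩
      refine ⟨⟨α, β, rfl⟩, ?_⟩
      show GoodP G [(α, p)] β
      simp only [GoodP_cons, GoodP_nil]
      exact ⟨hα, fun q hq h1 h2 => hcond q hq h1 h2, hβ⟩
    · rintro ⟨⟨α, β, rfl⟩, hg⟩
      have hg' : GoodP G [(α, p)] β := hg
      simp only [GoodP_cons, GoodP_nil] at hg'
      exact ⟨α, β, hg'.1, hg'.2.2, fun q hq h1 h2 => hg'.2.1 q hq h1 h2, rfl⟩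
  | test b =>
    ext z
    constructor
    · rintro ⟨h1, h2, h3⟩
      refine ⟨⟨h1, h3⟩, ?_⟩
      show GoodP G z.pairs z.last
      rw [h1]; exact h2
    · rintro ⟨⟨h1, h3⟩, hg⟩
      have hg' : GoodP G z.pairs z.last := hg
      rw [h1] at hg'
      exact ⟨h1, hg', h3⟩
  | plus e₁ e₂ ih₁ ih₂ =>
    show gsG G e₁ ∪ gsG G e₂ = _
    rw [ih₁, ih₂]
    ext z
    show z ∈ _ ∪ _ ↔ z ∈ gs e₁ ∪ gs e₂ ∧ _
    simp only [Set.mem_union, Set.mem_setOf_eq, Set.mem_sep_iff]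
    tauto
  | cat e₁ e₂ ih₁ ih₂ =>
    show fprod (gsG G e₁) (gsG G e₂) = _
    rw [ih₁, ih₂, fprod_good]
    rfl
  | star e ih =>
    show fstarG G (gsG G e) = _
    have hpow : ∀ n, fpowG G (gsG G e) n = {z ∈ fpow (gs e) n | GoodG G z} := by
      intro n
      induction n with
      | zero =>
        ext z
        show z.pairs = [] ∧ inAtG G z.last = true ↔ z.pairs = [] ∧ GoodG G z
        constructor
        · rintro ⟨h1, h2⟩
          refine ⟨h1, ?_⟩
          show GoodP G z.pairs z.last
          rw [h1]; exact h2
        · rintro ⟨h1, h2⟩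
          have h2' : GoodP G z.pairs z.last := h2
          rw [h1] at h2'
          exact ⟨h1, h2'⟩
      | succ n ihn =>
        show fprod (gsG G e) (fpowG G (gsG G e) n) = _
        rw [ihn, ih, fprod_good]
        rfl
    ext z
    show z ∈ ⋃ n, fpowG G (gsG G e) n ↔ z ∈ (⋃ n, fpow (gs e) n) ∧ GoodG G z
    simp only [Set.mem_iUnion]
    constructor
    · rintro ⟨n, hn⟩
      rw [hpow n] at hn
      exact ⟨⟨n, hn.1⟩, hn.2⟩
    · rintro ⟨⟨n, hn⟩, hg⟩
      exact ⟨n, (hpow n) ▸ ⟨hn, hg⟩⟩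

end KAT

open KAT in
/-- `GS^Γ(e) = GS(e) \ GS(uru)`. -/
theorem gsG_eq_gs_diff_uru {T A : Type} [DecidableEq A]
    (G : Gamma T A) (ps : List A) (hps : ∀ p : A, p ∈ ps) (e : KExp T A) :
    gsG G e = gs e \ gs (uru G ps) := by
  rw [gsG_eq_good]
  ext z
  simp only [Set.mem_sep_iff, Set.mem_diff, mem_gs_uru_iff G ps hps, not_not]
end

section
/- Let Γ be a set of assumptions as above. For every KAT expression e, atom α, and action p: D_{αp}(GS^Γ(e)) = GS^Γ(Δ^Γ_{αp}(e)). -/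
namespace KAT

variable {T A : Type} [DecidableEq A]

/-! ### Auxiliary lemmas for the derivative theorem -/

lemma GStr.first_of_nil {x : GStr T A} (h : x.pairs = []) : x.first = x.last := by
  obtain ⟨xs, l⟩ := x
  simp only at h
  subst h
  rfl

lemma GStr.first_of_cons {x : GStr T A} {a : Atom T × A} {l : List (Atom T × A)}
    (h : x.pairs = a :: l) : x.first = a.1 := by
  obtain ⟨xs, l'⟩ := x
  simp only at h
  subst h
  rfl

lemma mem_gderiv_iff {α : Atom T} {p : A} {R : Set (GStr T A)} {z : GStr T A} :
    z ∈ gderiv α p R ↔ (⟨(α, p) :: z.pairs, z.last⟩ : GStr T A) ∈ R := Iff.rfl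

lemma mem_fprod_first_last {G : Gamma T A} {X Y : Set (GStr T A)}
    (hX : ∀ x ∈ X, inAtG G x.first = true ∧ inAtG G x.last = true)
    (hY : ∀ y ∈ Y, inAtG G y.first = true ∧ inAtG G y.last = true) :
    ∀ z ∈ fprod X Y, inAtG G z.first = true ∧ inAtG G z.last = true := by
  rintro z ⟨x, hx, y, hy, hlf, rfl⟩
  refine ⟨?_, (hY y hy).2⟩
  cases hp : x.pairs with
  | nil =>
      cases hyp : y.pairs with
      | nil => exact (hY y hy).2
      | cons a t =>
          have := (hY y hy).1
          rw [GStr.first_of_cons hyp] at this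
          exact this
  | cons a t =>
      have := (hX x hx).1
      rw [GStr.first_of_cons hp] at this
      exact this

lemma fpowG_first_last {G : Gamma T A} {X : Set (GStr T A)}
    (hX : ∀ x ∈ X, inAtG G x.first = true ∧ inAtG G x.last = true) :
    ∀ n, ∀ x ∈ fpowG G X n, inAtG G x.first = true ∧ inAtG G x.last = true := by
  intro n
  induction n with
  | zero =>
      rintro x ⟨h1, h2⟩
      exact ⟨by rw [GStr.first_of_nil h1]; exact h2, h2⟩
  | succ n ih => exact mem_fprod_first_last hX ih

lemma gsG_first_last (G : Gamma T A) :
    ∀ (e : KExp T A), ∀ x ∈ gsG G e, inAtG G x.first = true ∧ inAtG G x.last = true := by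
  intro e
  induction e with
  | act p => rintro x ⟨α, β, hα, hβ, _, rfl⟩; exact ⟨hα, hβ⟩
  | test b => rintro x ⟨h1, h2, _⟩; exact ⟨by rw [GStr.first_of_nil h1]; exact h2, h2⟩
  | plus e₁ e₂ ih₁ ih₂ => rintro x (hx | hx); exacts [ih₁ x hx, ih₂ x hx]
  | cat e₁ e₂ ih₁ ih₂ => exact mem_fprod_first_last ih₁ ih₂
  | star e ih =>
      intro x hx
      obtain ⟨n, hn⟩ := Set.mem_iUnion.mp hx
      exact fpowG_first_last ih n x hn

lemma nil_mem_gsG {G : Gamma T A} {α : Atom T} (hα : inAtG G α = true) :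
    ∀ e : KExp T A, ((⟨[], α⟩ : GStr T A) ∈ gsG G e) ↔ Eps α e = true := by
  intro e
  induction e with
  | act p => simp [gsG, Eps]
  | test b => simp [gsG, Eps, hα]
  | plus e₁ e₂ ih₁ ih₂ =>
      simp only [gsG, Eps, Set.mem_union, ih₁, ih₂, Bool.or_eq_true]
  | cat e₁ e₂ ih₁ ih₂ =>
      simp only [gsG, Eps, Bool.and_eq_true]
      constructor
      · rintro ⟨x, hx, y, hy, hl, hz⟩
        have hp := congrArg GStr.pairs hz
        have hlast := congrArg GStr.last hz
        simp only [List.nil_eq, List.append_eq_nil_iff] at hp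
        obtain ⟨hx0, hy0⟩ := hp
        simp only at hlast
        obtain ⟨xs, xl⟩ := x
        obtain ⟨ys, yl⟩ := y
        simp only at hx0 hy0 hlast
        subst hx0; subst hy0; subst hlast
        have : xl = α := by
          have := hl; rw [GStr.first_of_nil rfl] at this; simpa using this
        subst this
        exact ⟨ih₁.mp hx, ih₂.mp hy⟩
      · rintro ⟨h1, h2⟩
        exact ⟨⟨[], α⟩, ih₁.mpr h1, ⟨[], α⟩, ih₂.mpr h2, rfl, rfl⟩
  | star e ih =>
      simp only [gsG, Eps, iff_true]
      exact Set.mem_iUnion.mpr ⟨0, rfl, hα⟩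

lemma gsSetG_union (G : Gamma T A) (E₁ E₂ : Set (KExp T A)) :
    gsSetG G (E₁ ∪ E₂) = gsSetG G E₁ ∪ gsSetG G E₂ := by
  ext z
  simp only [gsSetG, Set.mem_iUnion, Set.mem_union]
  constructor
  · rintro ⟨e, (he | he), hz⟩
    exacts [Or.inl ⟨e, he, hz⟩, Or.inr ⟨e, he, hz⟩]
  · rintro (⟨e, he, hz⟩ | ⟨e, he, hz⟩)
    exacts [⟨e, Or.inl he, hz⟩, ⟨e, Or.inr he, hz⟩]

lemma gsSetG_empty (G : Gamma T A) : gsSetG G (∅ : Set (KExp T A)) = ∅ := by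
  simp [gsSetG]

lemma gsSetG_singleton (G : Gamma T A) (e : KExp T A) : gsSetG G {e} = gsG G e := by
  simp [gsSetG]

lemma gsSetG_prodSet (G : Gamma T A) (E : Set (KExp T A)) (e : KExp T A) :
    gsSetG G (prodSet E e) = fprod (gsSetG G E) (gsG G e) := by
  have hcat : ∀ (f : KExp T A), gsSetG G {x | ∃ e' ∈ E, x = KExp.cat e' f}
      = fprod (gsSetG G E) (gsG G f) := by
    intro f
    ext z
    simp only [gsSetG, Set.mem_iUnion, Set.mem_setOf_eq]
    constructor
    · rintro ⟨e', ⟨e'', he'', rfl⟩, hz⟩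
      obtain ⟨x, hx, y, hy, hl, hz⟩ := hz
      exact ⟨x, Set.mem_iUnion.mpr ⟨e'', Set.mem_iUnion.mpr ⟨he'', hx⟩⟩, y, hy, hl, hz⟩
    · rintro ⟨x, hx, y, hy, hl, hz⟩
      obtain ⟨e'', he''⟩ := Set.mem_iUnion.mp hx
      obtain ⟨hmem, hx'⟩ := Set.mem_iUnion.mp he''
      exact ⟨.cat e'' f, ⟨e'', hmem, rfl⟩, x, hx', y, hy, hl, hz⟩
  match e with
  | .test .zero =>
      have h0 : gsG G (.test .zero : KExp T A) = ∅ := by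
        ext z; simp [gsG, BExp.eval]
      rw [show prodSet E (.test .zero : KExp T A) = ∅ from rfl, gsSetG_empty, h0]
      ext z; simp [fprod]
  | .test .one =>
      have h1 : gsG G (.test .one : KExp T A)
          = {z : GStr T A | z.pairs = [] ∧ inAtG G z.last = true} := by
        ext z; simp [gsG, BExp.eval]
      rw [show prodSet E (.test .one : KExp T A) = E from rfl, h1]
      ext z
      constructor
      · intro hz
        have hlast : inAtG G z.last = true := by
          simp only [gsSetG, Set.mem_iUnion] at hz
          obtain ⟨f, hf, hzf⟩ := hz
          exact (gsG_first_last G f z hzf).2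
        exact ⟨z, hz, ⟨[], z.last⟩, ⟨rfl, hlast⟩, rfl, by simp⟩
      · rintro ⟨x, hx, y, ⟨hy0, hy1⟩, hl, rfl⟩
        obtain ⟨ys, yl⟩ := y
        simp only at hy0
        subst hy0
        have : x.last = yl := by rw [hl]; rfl
        simpa [← this] using hx
  | .act q => exact hcat _
  | .test (.test t) => exact hcat _
  | .test (.not b) => exact hcat _
  | .test (.or b₁ b₂) => exact hcat _
  | .test (.and b₁ b₂) => exact hcat _
  | .plus e₁ e₂ => exact hcat _
  | .cat e₁ e₂ => exact hcat _
  | .star e₁ => exact hcat _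

lemma gderiv_fprod (α : Atom T) (p : A) (X Y : Set (GStr T A)) :
    gderiv α p (fprod X Y) =
      fprod (gderiv α p X) Y ∪ {y | (⟨[], α⟩ : GStr T A) ∈ X ∧ y ∈ gderiv α p Y} := by
  ext z
  obtain ⟨zs, zl⟩ := z
  constructor
  · rintro ⟨x, hx, y, hy, hl, hz⟩
    obtain ⟨xs, xl⟩ := x
    rw [GStr.mk.injEq] at hz
    obtain ⟨hp, hlast⟩ := hz
    cases xs with
    | nil =>
        right
        simp only [List.nil_append] at hp
        obtain ⟨ys, yl⟩ := y
        simp only at hp hlast hl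
        subst hp
        subst hlast
        have hxl : xl = α := hl
        subst hxl
        exact ⟨hx, hy⟩
    | cons a t =>
        left
        simp only [List.cons_append, List.cons.injEq] at hp
        obtain ⟨ha, ht⟩ := hp
        refine ⟨⟨t, xl⟩, ?_, y, hy, hl, ?_⟩
        · show (⟨(α, p) :: t, xl⟩ : GStr T A) ∈ X
          rw [ha]
          exact hx
        · simp only [GStr.mk.injEq]
          exact ⟨ht, hlast⟩
  · rintro (⟨x, hx, y, hy, hl, hz⟩ | ⟨h1, h2⟩)
    · rw [GStr.mk.injEq] at hz
      obtain ⟨hp, hlast⟩ := hz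
      subst hp
      subst hlast
      exact ⟨⟨(α, p) :: x.pairs, x.last⟩, hx, y, hy, hl, rfl⟩
    · exact ⟨⟨[], α⟩, h1, ⟨(α, p) :: zs, zl⟩, h2, rfl, rfl⟩

lemma gderiv_fstarG (G : Gamma T A) (α : Atom T) (p : A) (X : Set (GStr T A)) :
    gderiv α p (fstarG G X) = fprod (gderiv α p X) (fstarG G X) := by
  have fwd : ∀ n (zs : List (Atom T × A)) (zl : Atom T),
      (⟨(α, p) :: zs, zl⟩ : GStr T A) ∈ fpowG G X n →
      (⟨zs, zl⟩ : GStr T A) ∈ fprod (gderiv α p X) (fstarG G X) := by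
    intro n
    induction n with
    | zero =>
        intro zs zl hz
        exact absurd hz.1 (by simp)
    | succ n ih =>
        intro zs zl hz
        obtain ⟨x, hx, y, hy, hl, he⟩ := hz
        obtain ⟨xs, xl⟩ := x
        rw [GStr.mk.injEq] at he
        obtain ⟨hp, hlast⟩ := he
        cases xs with
        | nil =>
            simp only [List.nil_append] at hp
            obtain ⟨ys, yl⟩ := y
            simp only at hp hlast
            subst hp
            subst hlast
            exact ih zs zl hy
        | cons a t =>
            simp only [List.cons_append, List.cons.injEq] at hp
            obtain ⟨ha, ht⟩ := hp
            refine ⟨⟨t, xl⟩, ?_, y, Set.mem_iUnion.mpr ⟨n, hy⟩, hl, ?_⟩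
            · show (⟨(α, p) :: t, xl⟩ : GStr T A) ∈ X
              rw [ha]
              exact hx
            · simp only [GStr.mk.injEq]
              exact ⟨ht, hlast⟩
  ext z
  obtain ⟨zs, zl⟩ := z
  constructor
  · intro hz
    obtain ⟨n, hn⟩ := Set.mem_iUnion.mp hz
    exact fwd n zs zl hn
  · rintro ⟨x, hx, y, hy, hl, he⟩
    obtain ⟨n, hn⟩ := Set.mem_iUnion.mp hy
    rw [GStr.mk.injEq] at he
    obtain ⟨hp, hlast⟩ := he
    subst hp
    subst hlast
    exact Set.mem_iUnion.mpr ⟨n + 1, ⟨(α, p) :: x.pairs, x.last⟩, hx, y, hn, hl, rfl⟩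

lemma foldr_and_eval (β : Atom T) (l : List (BExp T)) :
    ((l.foldr BExp.and BExp.one).eval β = true) ↔ ∀ b ∈ l, b.eval β = true := by
  induction l with
  | nil => simp [BExp.eval]
  | cons h t ih => simp [BExp.eval, ih]

lemma gammaProd_eval (G : Gamma T A) (α β : Atom T) (p : A) :
    ((gammaProd G α p).eval β = true) ↔
      ∀ x ∈ G.eqns, x.2.1 = p → x.1.eval α = true → x.2.2.eval β = true := by
  unfold gammaProd
  rw [foldr_and_eval]
  constructor
  · intro h x hx h1 h2
    exact h _ (List.mem_map.mpr ⟨x, List.mem_filter.mpr ⟨hx, by simp [h1, h2]⟩, rfl⟩)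
  · intro h b hb
    obtain ⟨x, hx, rfl⟩ := List.mem_map.mp hb
    obtain ⟨hx1, hx2⟩ := List.mem_filter.mp hx
    simp only [Bool.and_eq_true, decide_eq_true_eq] at hx2
    exact h x hx1 hx2.1 hx2.2

lemma gderiv_gsG_aux (G : Gamma T A) (α : Atom T) (p : A) (hα : inAtG G α = true) :
    ∀ e : KExp T A, gderiv α p (gsG G e) = gsSetG G (pdGaux G α p e) := by
  intro e
  induction e with
  | act q =>
      by_cases hq : p = q
      · subst hq
        rw [show pdGaux G α p (.act p : KExp T A)
            = {KExp.test (gammaProd G α p)} from by simp [pdGaux], gsSetG_singleton]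
        ext z
        constructor
        · rintro ⟨α', β, hα', hβ, heq, hz⟩
          have hp := congrArg GStr.pairs hz
          have hlast := congrArg GStr.last hz
          simp only [List.cons.injEq, Prod.mk.injEq] at hp
          obtain ⟨⟨hα0, _⟩, hnil⟩ := hp
          simp only at hlast
          refine ⟨hnil, by rw [hlast]; exact hβ, ?_⟩
          rw [gammaProd_eval]
          intro x hx h1 h2
          rw [hlast]
          exact heq x hx h1 (by rw [← hα0]; exact h2)
        · rintro ⟨h1, h2, h3⟩
          refine ⟨α, z.last, hα, h2, ?_, by rw [h1]⟩
          intro x hx ha hb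
          exact (gammaProd_eval G α z.last p).mp h3 x hx ha hb
      · rw [show pdGaux G α p (.act q : KExp T A) = ∅ from by simp [pdGaux, hq],
          gsSetG_empty]
        ext z
        simp only [Set.mem_empty_iff_false, iff_false]
        rintro ⟨α', β, _, _, _, hz⟩
        have hp := congrArg GStr.pairs hz
        simp only [List.cons.injEq, Prod.mk.injEq] at hp
        exact hq hp.1.2
  | test b =>
      rw [show pdGaux G α p (.test b : KExp T A) = ∅ from rfl, gsSetG_empty]
      ext z
      simp only [Set.mem_empty_iff_false, iff_false]
      rintro ⟨h1, -⟩
      simp at h1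
  | plus e₁ e₂ ih₁ ih₂ =>
      rw [show pdGaux G α p (.plus e₁ e₂) = pdGaux G α p e₁ ∪ pdGaux G α p e₂ from rfl,
        gsSetG_union, ← ih₁, ← ih₂]
      rfl
  | cat e₁ e₂ ih₁ ih₂ =>
      rw [show pdGaux G α p (.cat e₁ e₂)
          = prodSet (pdGaux G α p e₁) e₂ ∪ (if Eps α e₁ then pdGaux G α p e₂ else ∅)
          from rfl, gsSetG_union, gsSetG_prodSet, ← ih₁]
      rw [show gsG G (.cat e₁ e₂) = fprod (gsG G e₁) (gsG G e₂) from rfl, gderiv_fprod]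
      congr 1
      by_cases hE : Eps α e₁ = true
      · rw [if_pos hE, ← ih₂]
        ext z
        simp [nil_mem_gsG hα e₁, hE]
      · rw [if_neg hE, gsSetG_empty]
        ext z
        simp only [Set.mem_setOf_eq, Set.mem_empty_iff_false, iff_false, not_and]
        intro h
        exact absurd ((nil_mem_gsG hα e₁).mp h) hE
  | star e₁ ih =>
      rw [show pdGaux G α p (.star e₁) = prodSet (pdGaux G α p e₁) (.star e₁) from rfl,
        gsSetG_prodSet, ← ih]
      rw [show gsG G (.star e₁) = fstarG G (gsG G e₁) from rfl, gderiv_fstarG]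

end KAT

open KAT in
/-- `D_{αp}(GS^Γ(e)) = GS^Γ(Δ^Γ_{αp}(e))`. -/
theorem gderiv_gsG_eq_gsSetG_pdG {T A : Type} [DecidableEq A]
    (G : Gamma T A) (e : KExp T A) (α : Atom T) (p : A) :
    gderiv α p (gsG G e) = gsSetG G (pdG G α p e) := by
  unfold pdG
  by_cases hα : inAtG G α = true
  · rw [if_pos hα]
    exact gderiv_gsG_aux G α p hα e
  · rw [if_neg hα, gsSetG_empty]
    ext z
    simp only [Set.mem_empty_iff_false, iff_false]
    intro hz
    have := (gsG_first_last G e _ hz).1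
    rw [GStr.first_of_cons (a := (α, p)) (l := z.pairs) rfl] at this
    exact hα this
end
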